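/- Let n be a positive natural number not of the form 4^k(8m+7) for any naturals k, m (so that n is a sum of three integer squares). Then n admits a nontrivial representation n = a² + b² + c² with a, b, c ∈ ℤ — i.e. a representation in which at least two of a, b, c are nonzero — if and only if n is not a power of 4. -/

import Mathlib

open Matrix
open scoped NumberTheorySymbols


/-! ### Binary quadratic forms over ℤ (bare-hands) -/

/-- value of the binary form with coefficients `a, 2b, c`. -/
def Bq (a b c x y : ℤ) : ℤ := a*x^2 + 2*b*x*y + c*y^2

lemma bq_smul (a b c g x y : ℤ) : Bq a b c (g*x) (g*y) = g^2 * Bq a b c x y := by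
  simp only [Bq]; ring

/-- a positive definite binary form attains a minimum on nonzero vectors -/
lemma bin_min_exists (a b c : ℤ)
    (hpos : ∀ x y : ℤ, ¬(x = 0 ∧ y = 0) → 0 < Bq a b c x y) :
    ∃ x y : ℤ, ¬(x = 0 ∧ y = 0) ∧
      ∀ u v : ℤ, ¬(u = 0 ∧ v = 0) → Bq a b c x y ≤ Bq a b c u v := by
  classical
  have hne : ∃ k : ℕ, ∃ x y : ℤ, ¬(x = 0 ∧ y = 0) ∧ Bq a b c x y = k := by
    refine ⟨(Bq a b c 1 0).toNat, 1, 0, by simp, ?_⟩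
    rw [Int.toNat_of_nonneg (le_of_lt (hpos 1 0 (by simp)))]
  obtain ⟨x, y, hxy, hk⟩ := Nat.find_spec hne
  refine ⟨x, y, hxy, fun u v huv => ?_⟩
  have h2 : ∃ x y : ℤ, ¬(x = 0 ∧ y = 0) ∧ Bq a b c x y = ((Bq a b c u v).toNat : ℤ) := by
    exact ⟨u, v, huv, by rw [Int.toNat_of_nonneg (le_of_lt (hpos u v huv))]⟩
  have := Nat.find_min' hne ⟨u, v, huv, by
    rw [Int.toNat_of_nonneg (le_of_lt (hpos u v huv))]⟩
  rw [hk]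
  calc ((Nat.find hne : ℕ) : ℤ) ≤ ((Bq a b c u v).toNat : ℤ) := by exact_mod_cast this
    _ = Bq a b c u v := Int.toNat_of_nonneg (le_of_lt (hpos u v huv))

/-- the minimum of a positive definite binary form is coprime-attained -/
lemma bin_min_primitive (a b c x y : ℤ)
    (hpos : ∀ u v : ℤ, ¬(u = 0 ∧ v = 0) → 0 < Bq a b c u v)
    (hxy : ¬(x = 0 ∧ y = 0))
    (hmin : ∀ u v : ℤ, ¬(u = 0 ∧ v = 0) → Bq a b c x y ≤ Bq a b c u v) :
    Int.gcd x y = 1 := by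
  set g : ℕ := Int.gcd x y with hg
  have hg0 : g ≠ 0 := by
    rw [hg, Ne, Int.gcd_eq_zero_iff]; exact hxy
  obtain ⟨x', hx'⟩ : (g : ℤ) ∣ x := Int.gcd_dvd_left _ _
  obtain ⟨y', hy'⟩ : (g : ℤ) ∣ y := Int.gcd_dvd_right _ _
  have hxy' : ¬(x' = 0 ∧ y' = 0) := by
    rintro ⟨rfl, rfl⟩; simp at hx' hy'; exact hxy ⟨hx', hy'⟩
  have hle := hmin x' y' hxy'
  have heq : Bq a b c x y = (g:ℤ)^2 * Bq a b c x' y' := by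
    rw [hx', hy', bq_smul]
  by_contra hne
  have hg2 : 2 ≤ (g:ℤ) := by
    have : 2 ≤ g := by omega
    exact_mod_cast this
  have hpos' := hpos x' y' hxy'
  have h4 : 4 ≤ (g:ℤ)^2 := by nlinarith
  nlinarith [hle, heq, hpos', h4]

/-- Hermite-type bound: for a positive definite binary form with minimum ν,
`3ν² ≤ 4 det`. Also: the form is equivalent to one with c-entry the min.
We prove the bound directly. -/
lemma bin_hermite (a b c x y : ℤ)
    (hpos : ∀ u v : ℤ, ¬(u = 0 ∧ v = 0) → 0 < Bq a b c u v)
    (hxy : ¬(x = 0 ∧ y = 0))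
    (hmin : ∀ u v : ℤ, ¬(u = 0 ∧ v = 0) → Bq a b c x y ≤ Bq a b c u v) :
    3 * (Bq a b c x y)^2 ≤ 4 * (a*c - b^2) := by
  have hprim : Int.gcd x y = 1 := bin_min_primitive a b c x y hpos hxy hmin
  obtain ⟨ν, hν⟩ : ∃ ν, ν = Bq a b c x y := ⟨_, rfl⟩
  have hν0 : 0 < ν := hν ▸ hpos x y hxy
  have hbez : x * Int.gcdA x y + y * Int.gcdB x y = 1 := by
    have := Int.gcd_eq_gcd_ab x y
    rw [hprim] at this; exact_mod_cast this.symm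
  obtain ⟨t, ht⟩ : ∃ t, t = Int.gcdA x y := ⟨_, rfl⟩
  obtain ⟨s, hs⟩ : ∃ s, s = -Int.gcdB x y := ⟨_, rfl⟩
  have hdet : x * t - y * s = 1 := by rw [ht, hs]; linarith [hbez]
  obtain ⟨B, hB⟩ : ∃ B, B = a*x*s + b*(x*t + y*s) + c*y*t := ⟨_, rfl⟩
  obtain ⟨k, hk⟩ : ∃ k : ℤ, (2*(B - ν*k))^2 ≤ ν^2 := by
    refine ⟨(2*B + ν) / (2*ν), ?_⟩
    have hr0 : 0 ≤ (2*B + ν) % (2*ν) := Int.emod_nonneg _ (by omega)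
    have hr1 : (2*B + ν) % (2*ν) < 2*ν := Int.emod_lt_of_pos _ (by omega)
    have hid : (2*B + ν) % (2*ν) = 2*B + ν - 2*ν*((2*B + ν) / (2*ν)) := by
      rw [Int.emod_def]
    nlinarith [hr0, hr1, hid]
  obtain ⟨u2, hu2⟩ : ∃ u2, u2 = s - k*x := ⟨_, rfl⟩
  obtain ⟨t2, ht2⟩ : ∃ t2, t2 = t - k*y := ⟨_, rfl⟩
  have hdet2 : x * t2 - y * u2 = 1 := by rw [hu2, ht2]; linear_combination hdet
  have hnz : ¬(u2 = 0 ∧ t2 = 0) := by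
    rintro ⟨h1, h2⟩; rw [h1, h2] at hdet2; simp at hdet2
  have hc2ν : ν ≤ Bq a b c u2 t2 := hν ▸ hmin u2 t2 hnz
  have hdetid : Bq a b c x y * Bq a b c u2 t2 - (B - Bq a b c x y * k)^2
      = (a*c - b^2) * (x*t2 - y*u2)^2 := by
    rw [hu2, ht2, hB]; simp only [Bq]; ring
  rw [← hν, hdet2] at hdetid
  nlinarith [hk, hc2ν, hν0, hdetid, mul_le_mul_of_nonneg_left hc2ν (le_of_lt hν0)]

/-- a positive definite binary form of determinant 1 is a sum of two squares of
linear forms. -/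
lemma bin_diag (a b c : ℤ)
    (hpos : ∀ u v : ℤ, ¬(u = 0 ∧ v = 0) → 0 < Bq a b c u v)
    (hdet1 : a*c - b^2 = 1) :
    ∃ p q r s : ℤ, a = p^2 + q^2 ∧ b = p*r + q*s ∧ c = r^2 + s^2 := by
  obtain ⟨x, y, hxy, hmin⟩ := bin_min_exists a b c hpos
  -- the minimum is 1
  have hbound := bin_hermite a b c x y hpos hxy hmin
  rw [hdet1] at hbound
  have hν0 : 0 < Bq a b c x y := hpos x y hxy
  have hν1 : Bq a b c x y = 1 := by nlinarith
  have hprim : Int.gcd x y = 1 := bin_min_primitive a b c x y hpos hxy hmin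
  have hbez : x * Int.gcdA x y + y * Int.gcdB x y = 1 := by
    have := Int.gcd_eq_gcd_ab x y
    rw [hprim] at this; exact_mod_cast this.symm
  obtain ⟨t, ht⟩ : ∃ t, t = Int.gcdA x y := ⟨_, rfl⟩
  obtain ⟨s, hs⟩ : ∃ s, s = -Int.gcdB x y := ⟨_, rfl⟩
  have hdet : x * t - y * s = 1 := by rw [ht, hs]; linarith [hbez]
  obtain ⟨B, hB⟩ : ∃ B, B = a*x*s + b*(x*t + y*s) + c*y*t := ⟨_, rfl⟩
  -- shear by exactly B (since min = 1)
  obtain ⟨u2, hu2⟩ : ∃ u2, u2 = s - B*x := ⟨_, rfl⟩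
  obtain ⟨t2, ht2⟩ : ∃ t2, t2 = t - B*y := ⟨_, rfl⟩
  have e4 : x * t2 - y * u2 = 1 := by rw [hu2, ht2]; linear_combination hdet
  have e2 : a*x*u2 + b*(x*t2 + y*u2) + c*y*t2 = 0 := by
    rw [hu2, ht2, hB]
    have : a*x^2 + 2*b*x*y + c*y^2 = 1 := hν1
    linear_combination (-(a*x*s + b*(x*t + y*s) + c*y*t)) * this
  have e1 : a*x^2 + 2*b*x*y + c*y^2 = 1 := hν1
  have e3 : a*u2^2 + 2*b*u2*t2 + c*t2^2 = 1 := by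
    have hdetid : (a*x^2 + 2*b*x*y + c*y^2) * (a*u2^2 + 2*b*u2*t2 + c*t2^2)
        - (a*x*u2 + b*(x*t2 + y*u2) + c*y*t2)^2 = (a*c - b^2) * (x*t2 - y*u2)^2 := by
      ring
    rw [e1, e2, e4, hdet1] at hdetid
    linarith [hdetid]
  -- now extract the squares
  refine ⟨t2, -y, -u2, x, ?_, ?_, ?_⟩
  · linear_combination t2^2*e1 + y^2*e3 - 2*y*t2*e2 - a*(x*t2 - y*u2 + 1)*e4
  · linear_combination (-(u2*t2))*e1 + (-(x*y))*e3 + (x*t2 + y*u2)*e2 - b*(x*t2 - y*u2 + 1)*e4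
  · linear_combination u2^2*e1 + x^2*e3 - 2*x*u2*e2 - c*(x*t2 - y*u2 + 1)*e4



/-- integer rounding: we can shift `t` by a multiple of `μ` into `[-μ/2, μ/2]`. -/
lemma round_half (μ t : ℤ) (hμ : 0 < μ) : ∃ x : ℤ, (2*(μ*x + t))^2 ≤ μ^2 := by
  refine ⟨-((2*t + μ) / (2*μ)), ?_⟩
  have hr0 : 0 ≤ (2*t + μ) % (2*μ) := Int.emod_nonneg _ (by omega)
  have hr1 : (2*t + μ) % (2*μ) < 2*μ := Int.emod_lt_of_pos _ (by omega)
  have hid : (2*t + μ) % (2*μ) = 2*t + μ - 2*μ*((2*t + μ) / (2*μ)) := by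
    rw [Int.emod_def]
  nlinarith [hr0, hr1, hid]

def Q3 (M : Matrix (Fin 3) (Fin 3) ℤ) (v : Fin 3 → ℤ) : ℤ :=
  dotProduct v (M.mulVec v)

lemma Q3_transform (M U : Matrix (Fin 3) (Fin 3) ℤ) (v : Fin 3 → ℤ) :
    Q3 (Uᵀ * M * U) v = Q3 M (U.mulVec v) := by
  unfold Q3
  rw [Matrix.mul_assoc, ← Matrix.mulVec_mulVec, dotProduct_mulVec,
    Matrix.vecMul_transpose, ← Matrix.mulVec_mulVec]

lemma Q3_entries (A : Matrix (Fin 3) (Fin 3) ℤ) (x y z : ℤ) :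
    Q3 A ![x, y, z] = A 0 0 * x^2 + A 1 1 * y^2 + A 2 2 * z^2
      + (A 0 1 + A 1 0) * (x*y) + (A 0 2 + A 2 0) * (x*z) + (A 1 2 + A 2 1) * (y*z) := by
  simp [Q3, Matrix.mulVec, dotProduct, Fin.sum_univ_three]
  ring

lemma Q3_smul (M : Matrix (Fin 3) (Fin 3) ℤ) (g : ℤ) (v : Fin 3 → ℤ) :
    Q3 M (fun i => g * v i) = g^2 * Q3 M v := by
  simp [Q3, Matrix.mulVec, dotProduct, Fin.sum_univ_three]
  ring

lemma mulVec_ne_zero (U : Matrix (Fin 3) (Fin 3) ℤ) (hdet : U.det = 1)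
    (v : Fin 3 → ℤ) (hv : v ≠ 0) : U.mulVec v ≠ 0 := by
  intro h
  apply hv
  have h2 : U.adjugate.mulVec (U.mulVec v) = 0 := by rw [h]; simp
  rw [Matrix.mulVec_mulVec, Matrix.adjugate_mul, hdet] at h2
  simpa using h2

lemma q3_min_exists (M : Matrix (Fin 3) (Fin 3) ℤ)
    (hpos : ∀ v : Fin 3 → ℤ, v ≠ 0 → 0 < Q3 M v) :
    ∃ v : Fin 3 → ℤ, v ≠ 0 ∧ ∀ w : Fin 3 → ℤ, w ≠ 0 → Q3 M v ≤ Q3 M w := by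
  classical
  have h10 : (![1,0,0] : Fin 3 → ℤ) ≠ 0 := by
    intro h; have := congrFun h 0; simp at this
  have hne : ∃ k : ℕ, ∃ v : Fin 3 → ℤ, v ≠ 0 ∧ Q3 M v = k := by
    refine ⟨(Q3 M ![1,0,0]).toNat, ![1,0,0], h10, ?_⟩
    rw [Int.toNat_of_nonneg (le_of_lt (hpos _ h10))]
  obtain ⟨v, hv, hk⟩ := Nat.find_spec hne
  refine ⟨v, hv, fun w hw => ?_⟩
  have hle := Nat.find_min' hne ⟨w, hw, by
    rw [Int.toNat_of_nonneg (le_of_lt (hpos w hw))]⟩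
  rw [hk]
  calc ((Nat.find hne : ℕ) : ℤ) ≤ ((Q3 M w).toNat : ℤ) := by exact_mod_cast hle
    _ = Q3 M w := Int.toNat_of_nonneg (le_of_lt (hpos w hw))

lemma q3_min_primitive (M : Matrix (Fin 3) (Fin 3) ℤ) (v : Fin 3 → ℤ)
    (hpos : ∀ w : Fin 3 → ℤ, w ≠ 0 → 0 < Q3 M w) (hv : v ≠ 0)
    (hmin : ∀ w : Fin 3 → ℤ, w ≠ 0 → Q3 M v ≤ Q3 M w) :
    Int.gcd (Int.gcd (v 0) (v 1)) (v 2) = 1 := by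
  set g : ℕ := Int.gcd (Int.gcd (v 0) (v 1)) (v 2) with hg
  have hdvd : ∀ i, (g : ℤ) ∣ v i := by
    intro i
    fin_cases i
    · exact dvd_trans (Int.dvd_trans (Int.gcd_dvd_left _ _) (Int.gcd_dvd_left _ _)) dvd_rfl
    · exact dvd_trans (Int.dvd_trans (Int.gcd_dvd_left _ _) (Int.gcd_dvd_right _ _)) dvd_rfl
    · exact Int.gcd_dvd_right _ _
  have hg0 : g ≠ 0 := by
    intro h0
    apply hv
    funext i
    have := hdvd i
    rw [h0] at this
    simpa using this
  set w : Fin 3 → ℤ := fun i => v i / g with hw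
  have hvw : v = fun i => (g : ℤ) * w i := by
    funext i
    simp only [hw]
    exact (Int.mul_ediv_cancel' (hdvd i)).symm
  have hw0 : w ≠ 0 := by
    intro h0; apply hv; rw [hvw, h0]; funext i; simp
  have heq : Q3 M v = (g:ℤ)^2 * Q3 M w := by rw [hvw, Q3_smul]
  by_contra hne
  have hg2 : 2 ≤ (g:ℤ) := by
    have : 2 ≤ g := by omega
    exact_mod_cast this
  have h4 : 4 ≤ (g:ℤ)^2 := by nlinarith
  have hle := hmin w hw0
  have hposw := hpos w hw0
  nlinarith [hle, heq, hposw, h4]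

/-- a primitive integer vector is the first column of a matrix of determinant 1 -/
lemma exists_unimodular_col (a b c : ℤ)
    (hprim : Int.gcd (Int.gcd a b : ℤ) c = 1) :
    ∃ U : Matrix (Fin 3) (Fin 3) ℤ, U.det = 1 ∧ U 0 0 = a ∧ U 1 0 = b ∧ U 2 0 = c := by
  by_cases hg : Int.gcd a b = 0
  · have hab : a = 0 ∧ b = 0 := Int.gcd_eq_zero_iff.mp hg
    obtain ⟨rfl, rfl⟩ := hab
    have hc : c = 1 ∨ c = -1 := by
      rw [hg] at hprim
      simp only [Int.natCast_zero, Int.gcd] at hprim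
      have : c.natAbs = 1 := by simpa [Int.gcd] using hprim
      rcases Int.natAbs_eq c with h | h <;> omega
    refine ⟨!![0, 1, 0; 0, 0, c; c, 0, 0], ?_, by simp, by simp, by simp⟩
    rw [Matrix.det_fin_three]
    simp
    rcases hc with h | h <;> rw [h] <;> ring
  · have hgz : (Int.gcd a b : ℤ) ≠ 0 := by exact_mod_cast hg
    obtain ⟨p, hp⟩ : ∃ p, p = Int.gcdA a b := ⟨_, rfl⟩
    obtain ⟨q, hq⟩ : ∃ q, q = Int.gcdB a b := ⟨_, rfl⟩
    have hbez1 : a * p + b * q = Int.gcd a b := by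
      rw [hp, hq]; exact (Int.gcd_eq_gcd_ab a b).symm
    obtain ⟨u, hu⟩ : ∃ u, u = Int.gcdA (Int.gcd a b : ℤ) c := ⟨_, rfl⟩
    obtain ⟨w, hw⟩ : ∃ w, w = Int.gcdB (Int.gcd a b : ℤ) c := ⟨_, rfl⟩
    have hbez2 : (Int.gcd a b : ℤ) * u + c * w = 1 := by
      rw [hu, hw]
      have := Int.gcd_eq_gcd_ab (Int.gcd a b : ℤ) c
      rw [hprim] at this
      exact_mod_cast this.symm
    obtain ⟨a', ha'⟩ : (Int.gcd a b : ℤ) ∣ a := Int.gcd_dvd_left _ _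
    obtain ⟨b', hb'⟩ : (Int.gcd a b : ℤ) ∣ b := Int.gcd_dvd_right _ _
    have hbez1' : p * a' + q * b' = 1 := by
      have h2 : (Int.gcd a b : ℤ) * (p * a' + q * b') = (Int.gcd a b : ℤ) * 1 := by
        linear_combination (-p) * ha' + (-q) * hb' + hbez1
      exact mul_left_cancel₀ hgz h2
    refine ⟨!![a, -q, -(w*a'); b, p, -(w*b'); c, 0, u], ?_, by simp, by simp, by simp⟩
    rw [Matrix.det_fin_three]
    simp
    linear_combination u * hbez1 + c * w * hbez1' + hbez2

lemma mul3_entry (U M : Matrix (Fin 3) (Fin 3) ℤ) (i j : Fin 3) :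
    (Uᵀ * M * U) i j = ∑ k, ∑ l, U k i * M k l * U l j := by
  simp [Matrix.mul_apply, Fin.sum_univ_three, Matrix.transpose_apply]
  ring

set_option maxHeartbeats 1000000 in
theorem ternary_isSumSq (M : Matrix (Fin 3) (Fin 3) ℤ)
    (hsymm : M.IsSymm) (hdet : M.det = 1)
    (hpos : ∀ v : Fin 3 → ℤ, v ≠ 0 → 0 < Q3 M v) :
    ∃ V : Matrix (Fin 3) (Fin 3) ℤ, M = Vᵀ * V := by
  obtain ⟨v, hv0, hmin⟩ := q3_min_exists M hpos
  have hprim := q3_min_primitive M v hpos hv0 hmin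
  obtain ⟨U, hUdet, hU0, hU1, hU2⟩ := exists_unimodular_col (v 0) (v 1) (v 2) hprim
  set M₁ := Uᵀ * M * U with hM₁def
  have hcol : (fun k => U k 0) = v := by
    funext k; fin_cases k <;> assumption
  have hM₁sym : ∀ i j, M₁ i j = M₁ j i := by
    intro i j
    rw [hM₁def, mul3_entry, mul3_entry]
    rw [Finset.sum_comm]
    apply Finset.sum_congr rfl; intro k _
    apply Finset.sum_congr rfl; intro l _
    rw [hsymm.apply]
    ring
  have hval : ∀ w : Fin 3 → ℤ, Q3 M₁ w = Q3 M (U.mulVec w) :=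
    fun w => Q3_transform M U w
  have hpos₁ : ∀ w : Fin 3 → ℤ, w ≠ 0 → 0 < Q3 M₁ w := by
    intro w hw
    rw [hval w]
    exact hpos _ (mulVec_ne_zero U hUdet w hw)
  obtain ⟨μ, hμQ⟩ : ∃ μ, Q3 M v = μ := ⟨_, rfl⟩
  have hmin₁ : ∀ w : Fin 3 → ℤ, w ≠ 0 → μ ≤ Q3 M₁ w := by
    intro w hw
    rw [hval w, ← hμQ]
    exact hmin _ (mulVec_ne_zero U hUdet w hw)
  have hdet₁ : M₁.det = 1 := by
    rw [hM₁def, Matrix.det_mul, Matrix.det_mul, Matrix.det_transpose, hdet, hUdet]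
    ring
  have h00 : M₁ 0 0 = μ := by
    rw [hM₁def, mul3_entry, ← hμQ, ← hcol]
    simp [Q3, Matrix.mulVec, dotProduct, Fin.sum_univ_three]
    ring
  have hμpos : 0 < μ := hμQ ▸ hpos v hv0
  obtain ⟨d, hd⟩ : ∃ d, M₁ 0 1 = d := ⟨_, rfl⟩
  obtain ⟨e, he⟩ : ∃ e, M₁ 0 2 = e := ⟨_, rfl⟩
  obtain ⟨f, hf⟩ : ∃ f, M₁ 1 1 = f := ⟨_, rfl⟩
  obtain ⟨g, hg⟩ : ∃ g, M₁ 1 2 = g := ⟨_, rfl⟩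
  obtain ⟨h, hh⟩ : ∃ h, M₁ 2 2 = h := ⟨_, rfl⟩
  have hs10 : M₁ 1 0 = d := by rw [hM₁sym 1 0, hd]
  have hs20 : M₁ 2 0 = e := by rw [hM₁sym 2 0, he]
  have hs21 : M₁ 2 1 = g := by rw [hM₁sym 2 1, hg]
  have hQ₁ : ∀ x y z : ℤ, Q3 M₁ ![x,y,z]
      = μ*x^2 + f*y^2 + h*z^2 + 2*d*(x*y) + 2*e*(x*z) + 2*g*(y*z) := by
    intro x y z
    rw [Q3_entries, h00, hd, he, hf, hg, hh, hs10, hs20, hs21]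
    ring
  have hdet₁' : μ*(f*h - g^2) - d*(d*h - g*e) + e*(d*g - f*e) = 1 := by
    rw [← hdet₁, Matrix.det_fin_three, h00, hd, he, hf, hg, hh, hs10, hs20, hs21]
    ring
  have hvecnz : ∀ x y z : ℤ, ¬(y = 0 ∧ z = 0) → (![x,y,z] : Fin 3 → ℤ) ≠ 0 := by
    intro x y z hyz h0
    have h1 := congrFun h0 1
    have h2 := congrFun h0 2
    simp at h1 h2
    exact hyz ⟨h1, h2⟩
  have hhb : ∀ x y z : ℤ, Bq (μ*f - d^2) (μ*g - d*e) (μ*h - e^2) y z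
      = μ * Q3 M₁ ![x,y,z] - (μ*x + (d*y + e*z))^2 := by
    intro x y z
    rw [hQ₁]
    simp only [Bq]
    ring
  have hbpos : ∀ y z : ℤ, ¬(y = 0 ∧ z = 0) →
      0 < Bq (μ*f - d^2) (μ*g - d*e) (μ*h - e^2) y z := by
    intro y z hyz
    obtain ⟨x, hx⟩ := round_half μ (d*y + e*z) hμpos
    have hQge : μ ≤ Q3 M₁ ![x,y,z] := hmin₁ _ (hvecnz x y z hyz)
    have hkey := hhb x y z
    nlinarith [hkey, hQge, hx, hμpos]
  obtain ⟨y₀, z₀, hyz₀, hminb⟩ := bin_min_exists _ _ _ hbpos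
  obtain ⟨ν, hνdef⟩ : ∃ ν, Bq (μ*f - d^2) (μ*g - d*e) (μ*h - e^2) y₀ z₀ = ν := ⟨_, rfl⟩
  have hνpos : 0 < ν := hνdef ▸ hbpos y₀ z₀ hyz₀
  have hlow : 3*μ^2 ≤ 4*ν := by
    obtain ⟨x, hx⟩ := round_half μ (d*y₀ + e*z₀) hμpos
    have hQge : μ ≤ Q3 M₁ ![x,y₀,z₀] := hmin₁ _ (hvecnz x y₀ z₀ hyz₀)
    have hkey := hνdef ▸ hhb x y₀ z₀
    nlinarith [hkey, hQge, hx, hμpos]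
  have hdethb : (μ*f - d^2)*(μ*h - e^2) - (μ*g - d*e)^2 = μ := by
    linear_combination μ * hdet₁'
  have hup : 3*ν^2 ≤ 4*μ := by
    have hb := bin_hermite _ _ _ y₀ z₀ hbpos hyz₀ hminb
    rw [hνdef, hdethb] at hb
    exact hb
  have hμ1 : μ = 1 := by
    by_contra hne
    have hge2 : 2 ≤ μ := by omega
    have hcube : 8 ≤ μ^3 := by nlinarith [hge2]
    have haux : 0 ≤ (4*ν - 3*μ^2) * (4*ν + 3*μ^2) :=
      mul_nonneg (by linarith [hlow]) (by nlinarith [hνpos, sq_nonneg μ])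
    have h1 : 9*μ^4 ≤ 16*ν^2 := by nlinarith [haux]
    have h2 : 27*μ^4 ≤ 64*μ := by nlinarith [h1, hup]
    nlinarith [hcube, h2, hμpos]
  have hbpos' : ∀ y z : ℤ, ¬(y = 0 ∧ z = 0) → 0 < Bq (f - d^2) (g - d*e) (h - e^2) y z := by
    intro y z hyz
    have hb := hbpos y z hyz
    rw [hμ1] at hb
    simpa using hb
  have hbdet' : (f - d^2)*(h - e^2) - (g - d*e)^2 = 1 := by
    have hb := hdethb
    rw [hμ1] at hb
    linear_combination hb
  obtain ⟨p, q, r, s, hp, hq, hr⟩ := bin_diag _ _ _ hbpos' hbdet'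
  -- M₁ = Wᵀ W for W = !![1,d,e; 0,p,r; 0,q,s]
  have hWt : (!![(1:ℤ), d, e; 0, p, r; 0, q, s])ᵀ = !![(1:ℤ), 0, 0; d, p, q; e, r, s] := by
    ext i j; fin_cases i <;> fin_cases j <;> rfl
  have hM₁W : M₁ = (!![(1:ℤ), d, e; 0, p, r; 0, q, s])ᵀ * !![(1:ℤ), d, e; 0, p, r; 0, q, s] := by
    rw [hWt, Matrix.mul_fin_three, Matrix.eta_fin_three M₁]
    refine congrArg Matrix.of ?_
    refine Matrix.vec3_eq ?_ ?_ ?_ <;> refine Matrix.vec3_eq ?_ ?_ ?_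
    · linear_combination h00 + hμ1
    · linear_combination hd
    · linear_combination he
    · linear_combination hs10
    · linear_combination hf + hp
    · linear_combination hg + hq
    · linear_combination hs20
    · linear_combination hs21 + hq
    · linear_combination hh + hr
  -- transport back along U
  obtain ⟨A, hA1, hA2⟩ : ∃ A : Matrix (Fin 3) (Fin 3) ℤ, U * A = 1 ∧ A * U = 1 := by
    refine ⟨U.adjugate, ?_, ?_⟩
    · rw [Matrix.mul_adjugate, hUdet]; simp
    · rw [Matrix.adjugate_mul, hUdet]; simp
  refine ⟨!![(1:ℤ), d, e; 0, p, r; 0, q, s] * A, ?_⟩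
  have hAU : Aᵀ * Uᵀ = 1 := by
    rw [← Matrix.transpose_mul, hA1, Matrix.transpose_one]
  calc M = 1 * M * 1 := by rw [Matrix.one_mul, Matrix.mul_one]
    _ = (Aᵀ*Uᵀ) * M * (U*A) := by rw [hAU, hA1]
    _ = Aᵀ * (Uᵀ * M * U) * A := by simp only [Matrix.mul_assoc]
    _ = Aᵀ * ((!![(1:ℤ), d, e; 0, p, r; 0, q, s])ᵀ * !![(1:ℤ), d, e; 0, p, r; 0, q, s]) * A := by
        rw [← hM₁def, hM₁W]
    _ = (!![(1:ℤ), d, e; 0, p, r; 0, q, s] * A)ᵀ * (!![(1:ℤ), d, e; 0, p, r; 0, q, s] * A) := by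
        rw [Matrix.transpose_mul]
        simp only [Matrix.mul_assoc]

lemma int_sq_pos {t : ℤ} (ht : t ≠ 0) : 0 < t^2 := by positivity

/-- From the Legendre-style data we obtain a primitive representation. -/
lemma rep_from_data (n : ℕ) (D N x c' : ℤ) (hD : 0 < D) (hN : 0 < N)
    (hdN : (n:ℤ)*D - N = 1) (hc' : c'*N - x^2 = D) :
    ∃ a b c : ℤ, a^2+b^2+c^2 = (n:ℤ) ∧ (1 < n → ¬(a*b = 0 ∧ b*c = 0 ∧ c*a = 0)) := by
  set M : Matrix (Fin 3) (Fin 3) ℤ := !![(n:ℤ), 1, 0; 1, c', -x; 0, -x, N] with hM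
  have hsymm : M.IsSymm := by
    rw [Matrix.IsSymm, hM]
    ext i j; fin_cases i <;> fin_cases j <;> rfl
  have hdet : M.det = 1 := by
    rw [hM, Matrix.det_fin_three]
    simp
    linear_combination (n:ℤ) * hc' + hdN
  have hpos : ∀ v : Fin 3 → ℤ, v ≠ 0 → 0 < Q3 M v := by
    intro v hv
    have hv' : v = ![v 0, v 1, v 2] := by
      funext i; fin_cases i <;> rfl
    have key : D*N*(Q3 M v) = N*(v 0)^2 + (D*(v 1) + N*(v 0))^2 + D*(N*(v 2) - x*(v 1))^2 := by
      rw [hv', Q3_entries]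
      simp only [hM]
      simp
      linear_combination D*(v 1)^2 * hc' + N*(v 0)^2 * hdN
    have hnz : v 0 ≠ 0 ∨ v 1 ≠ 0 ∨ v 2 ≠ 0 := by
      by_contra hco
      push_neg at hco
      obtain ⟨e0, e1, e2⟩ := hco
      apply hv
      funext i; fin_cases i <;> assumption
    have hge : 0 < D*N*(Q3 M v) := by
      rcases hnz with h0 | h1 | h2
      · have := int_sq_pos h0
        nlinarith [sq_nonneg (D*(v 1) + N*(v 0)), sq_nonneg (N*(v 2) - x*(v 1)), hD, hN]
      · rcases eq_or_ne (v 0) 0 with h0 | h0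
        · have h1' : D*(v 1) + N*(v 0) ≠ 0 := by
            rw [h0]; intro hz; apply h1
            have : D * v 1 = 0 := by simpa using hz
            exact (mul_eq_zero.mp this).resolve_left (by omega)
          have := int_sq_pos h1'
          nlinarith [sq_nonneg (v 0), sq_nonneg (N*(v 2) - x*(v 1)), hD, hN]
        · have := int_sq_pos h0
          nlinarith [sq_nonneg (D*(v 1) + N*(v 0)), sq_nonneg (N*(v 2) - x*(v 1)), hD, hN]
      · rcases eq_or_ne (v 0) 0 with h0 | h0
        · rcases eq_or_ne (v 1) 0 with h1 | h1
          · have h2' : N*(v 2) - x*(v 1) ≠ 0 := by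
              rw [h1]; intro hz
              apply h2
              have : N * v 2 = 0 := by simpa using hz
              exact (mul_eq_zero.mp this).resolve_left (by omega)
            have := int_sq_pos h2'
            nlinarith [sq_nonneg (v 0), sq_nonneg (D*(v 1) + N*(v 0)), hD, hN]
          · have h1' : D*(v 1) + N*(v 0) ≠ 0 := by
              rw [h0]; intro hz
              apply h1
              have : D * v 1 = 0 := by simpa using hz
              exact (mul_eq_zero.mp this).resolve_left (by omega)
            have := int_sq_pos h1'
            nlinarith [sq_nonneg (v 0), sq_nonneg (N*(v 2) - x*(v 1)), hD, hN]
        · have := int_sq_pos h0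
          nlinarith [sq_nonneg (D*(v 1) + N*(v 0)), sq_nonneg (N*(v 2) - x*(v 1)), hD, hN]
    have hDN : 0 < D*N := mul_pos hD hN
    by_contra hle
    push_neg at hle
    nlinarith [hge, hDN, hle]
  obtain ⟨V, hV⟩ := ternary_isSumSq M hsymm hdet hpos
  have hent : ∀ i j : Fin 3, M i j = V 0 i * V 0 j + V 1 i * V 1 j + V 2 i * V 2 j := by
    intro i j
    rw [hV]
    simp [Matrix.mul_apply, Fin.sum_univ_three]
  have h00 := hent 0 0
  have h01 := hent 0 1
  have hM00 : M 0 0 = (n:ℤ) := by rw [hM]; rfl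
  have hM01 : M 0 1 = 1 := by rw [hM]; rfl
  rw [hM00] at h00
  rw [hM01] at h01
  refine ⟨V 0 0, V 1 0, V 2 0, by linear_combination h00.symm, ?_⟩
  intro hn1 ⟨hab, hbc, hca⟩
  -- two of the three coordinates vanish; the third squares to n and divides 1
  have hone : ∃ t s : ℤ, t^2 = (n:ℤ) ∧ t * s = 1 := by
    rcases eq_or_ne (V 0 0) 0 with h0 | h0
    · rcases eq_or_ne (V 1 0) 0 with h1 | h1
      · refine ⟨V 2 0, V 2 1, ?_, ?_⟩
        · linear_combination (-1 : ℤ) * h00 + (-(V 0 0)) * h0 + (-(V 1 0)) * h1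
        · linear_combination (-1 : ℤ) * h01 + (-(V 0 1)) * h0 + (-(V 1 1)) * h1
      · have hc : V 2 0 = 0 := (mul_eq_zero.mp hbc).resolve_left h1
        refine ⟨V 1 0, V 1 1, ?_, ?_⟩
        · linear_combination (-1 : ℤ) * h00 + (-(V 0 0)) * h0 + (-(V 2 0)) * hc
        · linear_combination (-1 : ℤ) * h01 + (-(V 0 1)) * h0 + (-(V 2 1)) * hc
    · have hb : V 1 0 = 0 := (mul_eq_zero.mp hab).resolve_left h0
      have hc : V 2 0 = 0 := (mul_eq_zero.mp hca).resolve_right h0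
      refine ⟨V 0 0, V 0 1, ?_, ?_⟩
      · linear_combination (-1 : ℤ) * h00 + (-(V 1 0)) * hb + (-(V 2 0)) * hc
      · linear_combination (-1 : ℤ) * h01 + (-(V 1 1)) * hb + (-(V 2 1)) * hc
  obtain ⟨t, s, ht, hts⟩ := hone
  have : t = 1 ∨ t = -1 := Int.isUnit_iff.mp (IsUnit.of_mul_eq_one (a := t) s hts)
  have hn : (n:ℤ) = 1 := by rcases this with rfl | rfl <;> simpa using ht.symm
  have : n = 1 := by exact_mod_cast hn
  omega

/-- extract a square root of `-D` mod `p` -/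
lemma qr_solve (p : ℕ) [Fact p.Prime] (D : ℤ) (hJ : J(-D | p) = 1) :
    ∃ x : ℤ, (p:ℤ) ∣ x^2 + D := by
  have hL : legendreSym p (-D) = 1 := by
    rw [jacobiSym.legendreSym.to_jacobiSym]; exact hJ
  have hne : ((-D : ℤ) : ZMod p) ≠ 0 := by
    intro h0
    rw [← legendreSym.eq_zero_iff] at h0
    omega
  obtain ⟨y, hy⟩ := (legendreSym.eq_one_iff p hne).mp hL
  refine ⟨(y.val : ℤ), ?_⟩
  rw [← ZMod.intCast_zmod_eq_zero_iff_dvd]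
  push_cast
  have hyv : ((y.val : ℕ) : ZMod p) = y := by simp
  push_cast at hy
  rw [hyv]
  linear_combination -hy

/-- changing `-D` to `-n` under the Jacobi symbol, given `n*D ≡ 1 mod p`. -/
lemma jacobi_switch (p n : ℕ) (D : ℤ) (hgcd : Nat.Coprime n p)
    (hkey : (p:ℤ) ∣ (n:ℤ)*D - 1) : J(-D | p) = J(-(n:ℤ) | p) := by
  have h1 : J(-D * (n:ℤ)^2 | p) = J(-D | p) * J((n:ℤ) | p)^2 := by
    rw [jacobiSym.mul_left, jacobiSym.pow_left]
  have h2 : J((n:ℤ)|p)^2 = 1 := jacobiSym.sq_one (by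
    rw [Int.gcd_natCast_natCast]; exact hgcd)
  have h3 : J(-D * (n:ℤ)^2 | p) = J(-(n:ℤ) | p) := by
    apply jacobiSym.mod_left'
    obtain ⟨c, hc⟩ := hkey
    have : ((p:ℤ)) ∣ (-(n:ℤ)) - (-D * (n:ℤ)^2) := ⟨(n:ℤ)*c, by linear_combination (n:ℤ) * hc⟩
    exact Int.modEq_iff_dvd.mpr this
  rw [← h3, h1, h2, mul_one]

lemma case1 (n : ℕ) (h1 : 0 < n) (hmod : n % 4 = 1) :
    ∃ D N x c' : ℤ, 0 < D ∧ 0 < N ∧ (n:ℤ)*D - N = 1 ∧ c'*N - x^2 = D := by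
  obtain ⟨m, hm⟩ : ∃ m, n = m + 1 := ⟨n - 1, by omega⟩
  haveI : NeZero (4*n) := ⟨by omega⟩
  haveI : NeZero n := ⟨by omega⟩
  have hrr : (2*m+1) * (2*m+1) = m * (4*n) + 1 := by rw [hm]; ring
  have hunit : IsUnit (((2*m+1 : ℕ) : ZMod (4*n))) := by
    apply IsUnit.of_mul_eq_one (((2*m+1 : ℕ) : ZMod (4*n)))
    rw [← Nat.cast_mul, hrr, Nat.cast_add, Nat.cast_mul, Nat.cast_one, ZMod.natCast_self]
    simp
  obtain ⟨p, hpgt, hpp, hpmod⟩ := Nat.forall_exists_prime_gt_and_eq_mod hunit (4*n)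
  haveI : Fact p.Prime := ⟨hpp⟩
  have hcast : ∀ (k : ℕ), (k:ℕ) ∣ 4*n → (p : ZMod k) = ((2*m+1 : ℕ) : ZMod k) := by
    intro k hk
    have := congrArg (ZMod.castHom hk (ZMod k)) hpmod
    rwa [map_natCast, map_natCast] at this
  -- p % 4 = 1
  have hmod4 := hcast 4 ⟨n, rfl⟩
  have hp4 : p % 4 = 1 := by
    have h := (ZMod.natCast_eq_natCast_iff _ _ _).mp hmod4
    have : p % 4 = (2*m+1) % 4 := h
    omega
  have hp2 : p % 2 = 1 := by omega
  have hpodd : Odd p := Nat.odd_iff.mpr hp2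
  -- n ∣ p + 1
  have hmodn := hcast n ⟨4, by ring⟩
  have hdvdn : n ∣ p + 1 := by
    rw [← ZMod.natCast_eq_zero_iff]
    have hr1 : ((2*m+1+1 : ℕ) : ZMod n) = ((2*n : ℕ) : ZMod n) := by
      congr 1; omega
    push_cast at hr1 ⊢
    rw [hmodn]
    push_cast
    rw [hr1]
    simp
  obtain ⟨Dn, hDn⟩ := hdvdn
  have hD0 : 0 < Dn := by
    rcases Nat.eq_zero_or_pos Dn with h0 | h0
    · rw [h0] at hDn; omega
    · exact h0
  have hpn : Nat.Coprime n p := by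
    have hnd : ¬ p ∣ n := fun hdd => by have := Nat.le_of_dvd h1 hdd; omega
    exact ((Nat.Prime.coprime_iff_not_dvd hpp).mpr hnd).symm
  have hoddn : Odd n := Nat.odd_iff.mpr (by omega)
  -- J(n | p) = 1
  have hJn : J((n:ℤ) | p) = 1 := by
    have hrec : J((n:ℤ) | p) = J((p:ℤ) | n) :=
      (jacobiSym.quadratic_reciprocity_one_mod_four hp4 hoddn).symm
    have hstep : J((p:ℤ) | n) = J((-1 : ℤ) | n) := by
      apply jacobiSym.mod_left'
      refine Int.modEq_iff_dvd.mpr ⟨-(Dn:ℤ), ?_⟩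
      have hcast2 : (p:ℤ) + 1 = (n:ℤ) * (Dn:ℤ) := by exact_mod_cast hDn
      linear_combination -hcast2
    rw [hrec, hstep, jacobiSym.at_neg_one hoddn, ZMod.χ₄_nat_eq_if_mod_four]
    rw [show n % 2 = 1 from by omega, hmod]
    norm_num
  have hkey : (p:ℤ) ∣ (n:ℤ)*(Dn:ℤ) - 1 := by
    refine ⟨1, ?_⟩
    have hcast2 : (p:ℤ) + 1 = (n:ℤ) * (Dn:ℤ) := by exact_mod_cast hDn
    linear_combination -hcast2
  have hJD : J(-(Dn:ℤ) | p) = 1 := by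
    rw [jacobi_switch p n (Dn:ℤ) hpn hkey, jacobiSym.neg _ hpodd,
      ZMod.χ₄_nat_eq_if_mod_four, show p % 2 = 1 from hp2, hp4, hJn]
    norm_num
  obtain ⟨x, hx⟩ := qr_solve p (Dn:ℤ) hJD
  obtain ⟨c', hc'⟩ := hx
  refine ⟨(Dn:ℤ), (p:ℤ), x, c', by exact_mod_cast hD0, by exact_mod_cast hpp.pos, ?_, ?_⟩
  · have hcast2 : (p:ℤ) + 1 = (n:ℤ) * (Dn:ℤ) := by exact_mod_cast hDn
    linear_combination -hcast2
  · linear_combination -hc'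

lemma even_square_shift (x D : ℤ) (h : Even (x + D)) : (2:ℤ) ∣ x^2 + D := by
  obtain ⟨t, ht⟩ := h
  obtain ⟨s, hs⟩ := Int.even_mul_succ_self x
  exact ⟨s + t - x, by linear_combination hs + ht⟩

lemma case2 (n : ℕ) (h1 : 0 < n) (hmod : n % 4 = 2) :
    ∃ D N x c' : ℤ, 0 < D ∧ 0 < N ∧ (n:ℤ)*D - N = 1 ∧ c'*N - x^2 = D := by
  obtain ⟨m, hm⟩ : ∃ m, n = m + 1 := ⟨n - 1, by omega⟩
  haveI : NeZero (4*n) := ⟨by omega⟩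
  haveI : NeZero n := ⟨by omega⟩
  have hrr : (2*m+1) * (2*m+1) = m * (4*n) + 1 := by rw [hm]; ring
  have hunit : IsUnit (((2*m+1 : ℕ) : ZMod (4*n))) := by
    apply IsUnit.of_mul_eq_one (((2*m+1 : ℕ) : ZMod (4*n)))
    rw [← Nat.cast_mul, hrr, Nat.cast_add, Nat.cast_mul, Nat.cast_one, ZMod.natCast_self]
    simp
  obtain ⟨p, hpgt, hpp, hpmod⟩ := Nat.forall_exists_prime_gt_and_eq_mod hunit (4*n)
  haveI : Fact p.Prime := ⟨hpp⟩
  have hcast : ∀ (k : ℕ), (k:ℕ) ∣ 4*n → (p : ZMod k) = ((2*m+1 : ℕ) : ZMod k) := by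
    intro k hk
    have := congrArg (ZMod.castHom hk (ZMod k)) hpmod
    rwa [map_natCast, map_natCast] at this
  have hmod8 := hcast 8 ⟨n/2, by omega⟩
  have hp8 : p % 8 = 3 := by
    have h : p % 8 = (2*m+1) % 8 := (ZMod.natCast_eq_natCast_iff _ _ _).mp hmod8
    omega
  have hp4 : p % 4 = 3 := by omega
  have hp2 : p % 2 = 1 := by omega
  have hpodd : Odd p := Nat.odd_iff.mpr hp2
  have hmodn := hcast n ⟨4, by ring⟩
  have hdvdn : n ∣ p + 1 := by
    rw [← ZMod.natCast_eq_zero_iff]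
    have hr1 : ((2*m+1+1 : ℕ) : ZMod n) = ((2*n : ℕ) : ZMod n) := by
      congr 1; omega
    push_cast at hr1 ⊢
    rw [hmodn]
    push_cast
    rw [hr1]
    simp
  obtain ⟨Dn, hDn⟩ := hdvdn
  have hD0 : 0 < Dn := by
    rcases Nat.eq_zero_or_pos Dn with h0 | h0
    · rw [h0] at hDn; omega
    · exact h0
  have hpn : Nat.Coprime n p := by
    have hnd : ¬ p ∣ n := fun hdd => by have := Nat.le_of_dvd h1 hdd; omega
    exact ((Nat.Prime.coprime_iff_not_dvd hpp).mpr hnd).symm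
  -- n = 2 * m' with m' odd
  obtain ⟨m', hm'⟩ : ∃ m', n = 2*m' := ⟨n/2, by omega⟩
  have hm'2 : m' % 2 = 1 := by omega
  have hm'odd : Odd m' := Nat.odd_iff.mpr hm'2
  have hm'dvd : m' ∣ p + 1 := dvd_trans ⟨2, by omega⟩ ⟨Dn, hDn⟩
  obtain ⟨t, ht⟩ := hm'dvd
  have hPm : J((p:ℤ) | m') = J((-1 : ℤ) | m') := by
    apply jacobiSym.mod_left'
    refine Int.modEq_iff_dvd.mpr ⟨-(t:ℤ), ?_⟩
    have hcast2 : (p:ℤ) + 1 = (m':ℤ) * (t:ℤ) := by exact_mod_cast ht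
    linear_combination -hcast2
  have hJm : J((m':ℤ) | p) = 1 := by
    rcases (show m' % 4 = 1 ∨ m' % 4 = 3 by omega) with h | h
    · rw [jacobiSym.quadratic_reciprocity_one_mod_four h hpodd, hPm,
        jacobiSym.at_neg_one hm'odd, ZMod.χ₄_nat_eq_if_mod_four, hm'2, h]
      norm_num
    · rw [jacobiSym.quadratic_reciprocity_three_mod_four h hp4, hPm,
        jacobiSym.at_neg_one hm'odd, ZMod.χ₄_nat_eq_if_mod_four, hm'2, h]
      norm_num
  have hJn : J((n:ℤ) | p) = -1 := by
    have hcastn : (n:ℤ) = 2 * (m':ℤ) := by exact_mod_cast hm'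
    rw [hcastn, jacobiSym.mul_left, jacobiSym.at_two hpodd,
      ZMod.χ₈_nat_eq_if_mod_eight, hp2, hp8, hJm]
    norm_num
  have hkey : (p:ℤ) ∣ (n:ℤ)*(Dn:ℤ) - 1 := by
    refine ⟨1, ?_⟩
    have hcast2 : (p:ℤ) + 1 = (n:ℤ) * (Dn:ℤ) := by exact_mod_cast hDn
    linear_combination -hcast2
  have hJD : J(-(Dn:ℤ) | p) = 1 := by
    rw [jacobi_switch p n (Dn:ℤ) hpn hkey, jacobiSym.neg _ hpodd,
      ZMod.χ₄_nat_eq_if_mod_four, hp2, hp4, hJn]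
    norm_num
  obtain ⟨x, hx⟩ := qr_solve p (Dn:ℤ) hJD
  obtain ⟨c', hc'⟩ := hx
  refine ⟨(Dn:ℤ), (p:ℤ), x, c', by exact_mod_cast hD0, by exact_mod_cast hpp.pos, ?_, ?_⟩
  · have hcast2 : (p:ℤ) + 1 = (n:ℤ) * (Dn:ℤ) := by exact_mod_cast hDn
    linear_combination -hcast2
  · linear_combination -hc'

lemma case3 (n : ℕ) (h1 : 0 < n) (hmod : n % 8 = 3) :
    ∃ D N x c' : ℤ, 0 < D ∧ 0 < N ∧ (n:ℤ)*D - N = 1 ∧ c'*N - x^2 = D := by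
  obtain ⟨k, hk⟩ : ∃ k, n = 8*k + 3 := ⟨n/8, by omega⟩
  haveI : NeZero (4*n) := ⟨by omega⟩
  haveI : NeZero n := ⟨by omega⟩
  have hrr : (4*k+1) * (8*k+1) = k * (4*n) + 1 := by rw [hk]; ring
  have hunit : IsUnit (((4*k+1 : ℕ) : ZMod (4*n))) := by
    apply IsUnit.of_mul_eq_one (((8*k+1 : ℕ) : ZMod (4*n)))
    rw [← Nat.cast_mul, hrr, Nat.cast_add, Nat.cast_mul, Nat.cast_one, ZMod.natCast_self]
    simp
  obtain ⟨p, hpgt, hpp, hpmod⟩ := Nat.forall_exists_prime_gt_and_eq_mod hunit (4*n)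
  haveI : Fact p.Prime := ⟨hpp⟩
  have hcast : ∀ (j : ℕ), (j:ℕ) ∣ 4*n → (p : ZMod j) = ((4*k+1 : ℕ) : ZMod j) := by
    intro j hj
    have := congrArg (ZMod.castHom hj (ZMod j)) hpmod
    rwa [map_natCast, map_natCast] at this
  have hmod4 := hcast 4 ⟨n, rfl⟩
  have hp4 : p % 4 = 1 := by
    have h : p % 4 = (4*k+1) % 4 := (ZMod.natCast_eq_natCast_iff _ _ _).mp hmod4
    omega
  have hp2 : p % 2 = 1 := by omega
  have hpodd : Odd p := Nat.odd_iff.mpr hp2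
  have hmodn := hcast n ⟨4, by ring⟩
  have hdvdn : n ∣ 2*p + 1 := by
    rw [← ZMod.natCast_eq_zero_iff]
    have hr1 : ((2*(4*k+1)+1 : ℕ) : ZMod n) = ((n : ℕ) : ZMod n) := by
      congr 1; omega
    push_cast at hr1 ⊢
    rw [hmodn]
    push_cast
    rw [hr1]
    simp
  obtain ⟨Dn, hDn⟩ := hdvdn
  have hD0 : 0 < Dn := by
    rcases Nat.eq_zero_or_pos Dn with h0 | h0
    · rw [h0] at hDn; omega
    · exact h0
  have hpn : Nat.Coprime n p := by
    have hnd : ¬ p ∣ n := fun hdd => by have := Nat.le_of_dvd h1 hdd; omega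
    exact ((Nat.Prime.coprime_iff_not_dvd hpp).mpr hnd).symm
  have hoddn : Odd n := Nat.odd_iff.mpr (by omega)
  -- J(n | p) = 1
  have hJn : J((n:ℤ) | p) = 1 := by
    have hrec : J((n:ℤ) | p) = J((p:ℤ) | n) :=
      (jacobiSym.quadratic_reciprocity_one_mod_four hp4 hoddn).symm
    have hstep : J((p:ℤ) | n) = J(((4*k+1 : ℕ) : ℤ) | n) := by
      apply jacobiSym.mod_left'
      have hd : (n:ℤ) ∣ (p:ℤ) - ((4*k+1 : ℕ) : ℤ) := by
        rw [← ZMod.intCast_zmod_eq_zero_iff_dvd]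
        push_cast
        rw [hmodn]
        push_cast
        ring
      obtain ⟨u, hu⟩ := hd
      exact Int.modEq_iff_dvd.mpr ⟨-u, by linear_combination -hu⟩
    have hg2 : Int.gcd 2 (n:ℤ) = 1 := by
      rw [show (2:ℤ) = ((2:ℕ):ℤ) by norm_num, Int.gcd_natCast_natCast]
      exact (Nat.prime_two.coprime_iff_not_dvd).mpr (by omega)
    have h4J : J((4:ℤ) | n) = 1 := by
      rw [show (4:ℤ) = 2^2 by norm_num]
      exact jacobiSym.sq_one' hg2
    have hmul : J((4:ℤ) * ((4*k+1 : ℕ) : ℤ) | n)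
        = J((4:ℤ) | n) * J(((4*k+1 : ℕ) : ℤ) | n) := jacobiSym.mul_left _ _ n
    have hmod2 : J((4:ℤ) * ((4*k+1 : ℕ) : ℤ) | n) = J((-2 : ℤ) | n) := by
      apply jacobiSym.mod_left'
      refine Int.modEq_iff_dvd.mpr ⟨-2, ?_⟩
      push_cast [hk]
      ring
    have hneg2 : J((-2 : ℤ) | n) = 1 := by
      rw [jacobiSym.at_neg_two hoddn, ZMod.χ₈'_nat_eq_if_mod_eight,
        show n % 2 = 1 from by omega, hmod]
      norm_num
    rw [hrec, hstep]
    have := hmod2.symm.trans hmul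
    rw [hneg2, h4J, one_mul] at this
    exact this.symm
  have hkey : (p:ℤ) ∣ (n:ℤ)*(Dn:ℤ) - 1 := by
    refine ⟨2, ?_⟩
    have hcast2 : 2*(p:ℤ) + 1 = (n:ℤ) * (Dn:ℤ) := by exact_mod_cast hDn
    linear_combination -hcast2
  have hJD : J(-(Dn:ℤ) | p) = 1 := by
    rw [jacobi_switch p n (Dn:ℤ) hpn hkey, jacobiSym.neg _ hpodd,
      ZMod.χ₄_nat_eq_if_mod_four, hp2, hp4, hJn]
    norm_num
  obtain ⟨x₀, hx₀⟩ := qr_solve p (Dn:ℤ) hJD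
  -- fix parity so that 2 ∣ x² + D as well
  obtain ⟨x, hpx, h2x⟩ : ∃ x : ℤ, (p:ℤ) ∣ x^2 + (Dn:ℤ) ∧ (2:ℤ) ∣ x^2 + (Dn:ℤ) := by
    obtain ⟨c₀, hc₀⟩ := hx₀
    rcases Int.even_or_odd (x₀ + (Dn:ℤ)) with he | ho
    · exact ⟨x₀, ⟨c₀, hc₀⟩, even_square_shift _ _ he⟩
    · refine ⟨x₀ + p, ⟨c₀ + 2*x₀ + p, by linear_combination hc₀⟩, ?_⟩
      apply even_square_shift
      obtain ⟨t, ht⟩ := ho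
      obtain ⟨u, hu⟩ : Odd (p:ℤ) := by
        rcases Int.even_or_odd (p:ℤ) with he' | ho'
        · exfalso
          obtain ⟨w, hw⟩ := he'
          omega
        · exact ho'
      exact ⟨t + u + 1, by linarith [ht, hu]⟩
  have hcop : IsCoprime (2:ℤ) ((p:ℕ):ℤ) := by
    rw [Int.isCoprime_iff_gcd_eq_one, show (2:ℤ) = ((2:ℕ):ℤ) by norm_num,
      Int.gcd_natCast_natCast]
    exact (Nat.prime_two.coprime_iff_not_dvd).mpr (by omega)
  obtain ⟨c', hc'⟩ := hcop.mul_dvd h2x hpx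
  refine ⟨(Dn:ℤ), 2*(p:ℤ), x, c', by exact_mod_cast hD0,
    by have : (0:ℤ) < (p:ℕ) := by exact_mod_cast hpp.pos
       linarith, ?_, ?_⟩
  · have hcast2 : 2*(p:ℤ) + 1 = (n:ℤ) * (Dn:ℤ) := by exact_mod_cast hDn
    linear_combination -hcast2
  · linear_combination -hc'

lemma core (n : ℕ) (h1 : 0 < n) (h4 : ¬ 4 ∣ n) (h7 : n % 8 ≠ 7) :
    ∃ a b c : ℤ, a^2+b^2+c^2 = (n:ℤ) ∧ (1 < n → ¬(a*b = 0 ∧ b*c = 0 ∧ c*a = 0)) := by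
  have hdata : ∃ D N x c' : ℤ, 0 < D ∧ 0 < N ∧ (n:ℤ)*D - N = 1 ∧ c'*N - x^2 = D := by
    rcases (show n % 4 = 1 ∨ n % 4 = 2 ∨ n % 8 = 3 by omega) with h | h | h
    · exact case1 n h1 h
    · exact case2 n h1 h
    · exact case3 n h1 h
  obtain ⟨D, N, x, c', hD, hN, h3, h4'⟩ := hdata
  exact rep_from_data n D N x c' hD hN h3 h4'

lemma pow4_only_trivial : ∀ k : ℕ, ∀ a b c : ℤ, a^2+b^2+c^2 = 4^k →
    a*b = 0 ∧ b*c = 0 ∧ c*a = 0 := by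
  intro k
  induction k with
  | zero =>
    intro a b c h
    norm_num at h
    have key : ∀ x y : ℤ, x^2 + y^2 ≤ 1 → x * y = 0 := by
      intro x y hxy
      by_contra hne
      obtain ⟨hx, hy⟩ := mul_ne_zero_iff.mp hne
      have h1 : 0 < x^2 := by positivity
      have h2 : 0 < y^2 := by positivity
      omega
    refine ⟨key a b (by nlinarith [sq_nonneg c]), key b c (by nlinarith [sq_nonneg a]),
      key c a (by nlinarith [sq_nonneg b])⟩
  | succ k ih =>
    intro a b c h
    rcases Int.even_or_odd a with ⟨x, rfl⟩ | ⟨x, rfl⟩ <;>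
      rcases Int.even_or_odd b with ⟨y, rfl⟩ | ⟨y, rfl⟩ <;>
      rcases Int.even_or_odd c with ⟨z, rfl⟩ | ⟨z, rfl⟩
    · -- all even
      have h4 : (4:ℤ)*(x^2+y^2+z^2) = 4*4^k := by linear_combination h
      have hs : x^2+y^2+z^2 = 4^k := by
        have := mul_left_cancel₀ (show (4:ℤ) ≠ 0 by norm_num) h4
        exact this
      obtain ⟨h1, h2, h3⟩ := ih x y z hs
      refine ⟨?_, ?_, ?_⟩
      · have : (4:ℤ)*((x+x)*(y+y)) = 4*0 := by linear_combination 16 * h1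
        exact mul_left_cancel₀ (by norm_num) this
      · have : (4:ℤ)*((y+y)*(z+z)) = 4*0 := by linear_combination 16 * h2
        exact mul_left_cancel₀ (by norm_num) this
      · have : (4:ℤ)*((z+z)*(x+x)) = 4*0 := by linear_combination 16 * h3
        exact mul_left_cancel₀ (by norm_num) this
    · exfalso
      obtain ⟨S, hS⟩ : ∃ S : ℤ, 4*S + 1 = 4*4^k :=
        ⟨x^2+y^2+z^2+z, by linear_combination h⟩
      omega
    · exfalso
      obtain ⟨S, hS⟩ : ∃ S : ℤ, 4*S + 1 = 4*4^k :=
        ⟨x^2+y^2+y+z^2, by linear_combination h⟩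
      omega
    · exfalso
      obtain ⟨S, hS⟩ : ∃ S : ℤ, 4*S + 2 = 4*4^k :=
        ⟨x^2+y^2+y+z^2+z, by linear_combination h⟩
      omega
    · exfalso
      obtain ⟨S, hS⟩ : ∃ S : ℤ, 4*S + 1 = 4*4^k :=
        ⟨x^2+x+y^2+z^2, by linear_combination h⟩
      omega
    · exfalso
      obtain ⟨S, hS⟩ : ∃ S : ℤ, 4*S + 2 = 4*4^k :=
        ⟨x^2+x+y^2+z^2+z, by linear_combination h⟩
      omega
    · exfalso
      obtain ⟨S, hS⟩ : ∃ S : ℤ, 4*S + 2 = 4*4^k :=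
        ⟨x^2+x+y^2+y+z^2, by linear_combination h⟩
      omega
    · exfalso
      obtain ⟨S, hS⟩ : ∃ S : ℤ, 4*S + 3 = 4*4^k :=
        ⟨x^2+x+y^2+y+z^2+z, by linear_combination h⟩
      omega

lemma backward_aux : ∀ n : ℕ, 0 < n → (¬ ∃ k m : ℕ, n = 4^k*(8*m+7)) →
    (¬ ∃ k : ℕ, n = 4^k) →
    ∃ a b c : ℤ, a^2+b^2+c^2 = (n:ℤ) ∧ ¬(a*b = 0 ∧ b*c = 0 ∧ c*a = 0) := by
  intro n
  induction n using Nat.strong_induction_on with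
  | _ n ih =>
    intro h1 hform hnp
    by_cases h4 : 4 ∣ n
    · obtain ⟨n', rfl⟩ := h4
      have h1' : 0 < n' := by omega
      have hform' : ¬ ∃ k m : ℕ, n' = 4^k*(8*m+7) := by
        rintro ⟨k, m, rfl⟩; exact hform ⟨k+1, m, by ring⟩
      have hnp' : ¬ ∃ k : ℕ, n' = 4^k := by
        rintro ⟨k, rfl⟩; exact hnp ⟨k+1, by ring⟩
      obtain ⟨a, b, c, hs, hnt⟩ := ih n' (by omega) h1' hform' hnp'
      refine ⟨2*a, 2*b, 2*c, ?_, ?_⟩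
      · push_cast
        linear_combination (4:ℤ) * hs
      · rintro ⟨hab, hbc, hca⟩
        refine hnt ⟨?_, ?_, ?_⟩
        · exact mul_left_cancel₀ (show (4:ℤ) ≠ 0 by norm_num)
            (by linear_combination hab)
        · exact mul_left_cancel₀ (show (4:ℤ) ≠ 0 by norm_num)
            (by linear_combination hbc)
        · exact mul_left_cancel₀ (show (4:ℤ) ≠ 0 by norm_num)
            (by linear_combination hca)
    · have h7 : n % 8 ≠ 7 := by
        intro h7
        exact hform ⟨0, n/8, by omega⟩
      have hn1 : 1 < n := by
        by_contra hle
        exact hnp ⟨0, by omega⟩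
      obtain ⟨a, b, c, hs, hnt⟩ := core n h1 h4 h7
      exact ⟨a, b, c, hs, hnt hn1⟩

/-- a positive natural number n, not of the form 4^k(8m+7)
(hence a sum of three integer squares), admits a nontrivial representation
n = a² + b² + c² (one with at least two nonzero coordinates) if and only if
n is not a power of 4. -/
theorem nontrivial_three_square_representation
    (n : ℕ) (hn : 0 < n) (hform : ¬ ∃ k m : ℕ, n = 4 ^ k * (8 * m + 7)) :
    (∃ a b c : ℤ, a ^ 2 + b ^ 2 + c ^ 2 = (n : ℤ) ∧
        ¬(a * b = 0 ∧ b * c = 0 ∧ c * a = 0)) ↔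
      ¬ ∃ k : ℕ, n = 4 ^ k := by
  constructor
  · rintro ⟨a, b, c, hsum, hnt⟩ ⟨k, rfl⟩
    apply hnt
    apply pow4_only_trivial k a b c
    push_cast at hsum
    linear_combination hsum
  · intro hnp4
    exact backward_aux n hn hform hnp4
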